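/- Suppose 0 < C < K and F(1) < (1 − C/K) * exp(λ), and let p* ∈ (0,1) be the unique solution of F(p) = G(p) in (0,1). Define U(q,σ) := q * U_OFF(σ) + (1 − q) * C. Then p* is an evolutionarily stable strategy with invasion barrier 1: for every q ∈ [0,1] with q ≠ p* and every ε ∈ (0,1), setting p_ε := ε q + (1 − ε) p*, one has U(p*, p_ε) < U(q, p_ε). -/

import Mathlib

/-- Under the existence/uniqueness condition `0 < C < K` and
`F(1) < (1 − C/K) * exp λ`, the unique interior solution `p* ∈ (0,1)` of
`F(p) = G(p)` is an evolutionarily stable strategy with invasion barrier 1: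
for every mutant strategy `q ∈ [0,1]`, `q ≠ p*`, and every `ε ∈ (0,1)`, with
`p_ε := ε q + (1 − ε) p*` one has `U(p*, p_ε) < U(q, p_ε)`, where
`U(q,σ) = q * U_OFF(σ) + (1 − q) * C`. -/
theorem mixed_equilibrium_is_ESS (T : ℕ) (hT : 1 ≤ T)
    (lam : ℝ) (hlam : 0 < lam)
    (r : Fin T → ℝ) (hr : ∀ t, 0 < r t) (hrsum : ∑ t, r t = 1)
    (τ : Fin T → ℝ) (hτ : ∀ t, 0 < τ t)
    (K C : ℝ) (hK : 0 < K) (hC : 0 < C) (hCK : C < K)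
    (S : Set (Fin T → ℕ))
    (hSdef : S = {x : Fin T → ℕ | ∑ t, (x t : ℝ) * τ t / (1 + τ t) < 1})
    (hSfin : S.Finite)
    (F : ℝ → ℝ)
    (hF : ∀ p : ℝ, F p =
      ∑ x ∈ hSfin.toFinset, ∏ t, (lam * r t * p) ^ (x t) / (Nat.factorial (x t) : ℝ))
    (G : ℝ → ℝ)
    (hG : ∀ p : ℝ, G p = (1 - C / K) * Real.exp (lam * p))
    (hcond : F 1 < (1 - C / K) * Real.exp lam)
    (UOFF : ℝ → ℝ)
    (hUOFF : ∀ p : ℝ, UOFF p = K * (1 - Real.exp (-(lam * p)) * F p))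
    (U : ℝ → ℝ → ℝ)
    (hU : ∀ q σ : ℝ, U q σ = q * UOFF σ + (1 - q) * C)
    (pstar : ℝ) (hpstar : pstar ∈ Set.Ioo (0 : ℝ) 1) (hpeq : F pstar = G pstar) :
    ∀ q ∈ Set.Icc (0 : ℝ) 1, q ≠ pstar → ∀ ε ∈ Set.Ioo (0 : ℝ) 1,
      U pstar (ε * q + (1 - ε) * pstar) < U q (ε * q + (1 - ε) * pstar) := by
  classical
  set Sf : Finset (Fin T → ℕ) := hSfin.toFinset with hSfdef
  have hmem : ∀ x : Fin T → ℕ, x ∈ Sf ↔ ∑ t, (x t : ℝ) * τ t / (1 + τ t) < 1 := by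
    intro x
    rw [hSfdef, Set.Finite.mem_toFinset, hSdef]
    exact Iff.rfl
  set n : (Fin T → ℕ) → ℕ := fun x => ∑ t, x t with hn
  set c : (Fin T → ℕ) → ℝ := fun x => ∏ t, (lam * r t) ^ (x t) / (Nat.factorial (x t) : ℝ)
    with hc
  have hcpos : ∀ x, 0 < c x := by
    intro x
    apply Finset.prod_pos
    intro t _
    have h1 : 0 < lam * r t := mul_pos hlam (hr t)
    positivity
  have hFc : ∀ p : ℝ, F p = ∑ x ∈ Sf, c x * p ^ n x := by
    intro p
    rw [hF]
    refine Finset.sum_congr rfl fun x _ => ?_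
    rw [hc, hn]
    simp only
    rw [← Finset.prod_pow_eq_pow_sum, ← Finset.prod_mul_distrib]
    refine Finset.prod_congr rfl fun t _ => ?_
    rw [mul_pow]
    ring
  -- downward closedness
  have hdown : ∀ x y : Fin T → ℕ, (∀ t, y t ≤ x t) → x ∈ Sf → y ∈ Sf := by
    intro x y hle hx
    rw [hmem] at hx ⊢
    refine lt_of_le_of_lt ?_ hx
    apply Finset.sum_le_sum
    intro t _
    have h1 : (0:ℝ) < 1 + τ t := by linarith [hτ t]
    have h2 : (y t : ℝ) ≤ (x t : ℝ) := by exact_mod_cast hle t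
    have h3 : (0:ℝ) ≤ τ t := (hτ t).le
    gcongr
  have h0S : (0 : Fin T → ℕ) ∈ Sf := by
    rw [hmem]; simp
  -- a maximizer of the weighted sum
  obtain ⟨y0, hy0S, hy0max⟩ :=
    Finset.exists_max_image Sf (fun y => ∑ t, (y t : ℝ) * τ t / (1 + τ t)) ⟨0, h0S⟩
  set t0 : Fin T := ⟨0, hT⟩ with ht0
  -- sum of an updated vector
  have hwsum : ∀ (z : Fin T → ℕ) (t : Fin T),
      ∑ s, ((Function.update z t (z t + 1)) s : ℝ) * τ s / (1 + τ s)
        = (∑ s, (z s : ℝ) * τ s / (1 + τ s)) + τ t / (1 + τ t) := by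
    intro z t
    rw [← Finset.add_sum_erase _ _ (Finset.mem_univ t),
        ← Finset.add_sum_erase _ (fun s => (z s : ℝ) * τ s / (1 + τ s)) (Finset.mem_univ t)]
    have h1 : ∑ s ∈ Finset.univ.erase t,
        ((Function.update z t (z t + 1)) s : ℝ) * τ s / (1 + τ s)
        = ∑ s ∈ Finset.univ.erase t, (z s : ℝ) * τ s / (1 + τ s) := by
      refine Finset.sum_congr rfl fun s hs => ?_
      rw [Function.update_of_ne (Finset.ne_of_mem_erase hs)]
    rw [h1, Function.update_self]
    push_cast
    ring
  have hy0not : Function.update y0 t0 (y0 t0 + 1) ∉ Sf := by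
    intro hmem'
    have h1 := hy0max _ hmem'
    rw [hwsum y0 t0] at h1
    have h2 : 0 < τ t0 / (1 + τ t0) := by
      have := hτ t0
      positivity
    linarith
  have hnupd : ∀ (z : Fin T → ℕ) (t : Fin T), n (Function.update z t (z t + 1)) = n z + 1 := by
    intro z t
    rw [hn]
    simp only
    rw [← Finset.add_sum_erase _ _ (Finset.mem_univ t),
        ← Finset.add_sum_erase _ z (Finset.mem_univ t), Function.update_self]
    have h1 : ∑ s ∈ Finset.univ.erase t, Function.update z t (z t + 1) s
        = ∑ s ∈ Finset.univ.erase t, z s := by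
      refine Finset.sum_congr rfl fun s hs => ?_
      rw [Function.update_of_ne (Finset.ne_of_mem_erase hs)]
    rw [h1]
    omega
  have hcup : ∀ (y : Fin T → ℕ) (t : Fin T),
      c (Function.update y t (y t + 1)) * ((y t : ℝ) + 1) = lam * r t * c y := by
    intro y t
    rw [hc]
    simp only
    rw [← Finset.mul_prod_erase _ _ (Finset.mem_univ t),
        ← Finset.mul_prod_erase _
          (fun s => (lam * r s) ^ (y s) / (Nat.factorial (y s) : ℝ)) (Finset.mem_univ t)]
    have h1 : ∏ s ∈ Finset.univ.erase t,
        (lam * r s) ^ (Function.update y t (y t + 1) s) /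
          (Nat.factorial (Function.update y t (y t + 1) s) : ℝ)
        = ∏ s ∈ Finset.univ.erase t, (lam * r s) ^ (y s) / (Nat.factorial (y s) : ℝ) := by
      refine Finset.prod_congr rfl fun s hs => ?_
      rw [Function.update_of_ne (Finset.ne_of_mem_erase hs)]
    rw [h1, Function.update_self]
    have hfac : (Nat.factorial (y t + 1) : ℝ) = ((y t : ℝ) + 1) * (Nat.factorial (y t) : ℝ) := by
      rw [Nat.factorial_succ]
      push_cast
      ring
    have hfne : (Nat.factorial (y t) : ℝ) ≠ 0 := by
      exact_mod_cast (Nat.factorial_pos (y t)).ne'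
    have hfne2 : (y t : ℝ) + 1 ≠ 0 := by positivity
    rw [hfac]
    field_simp [hfac]
    ring
  -- per-coordinate identity: shift sum
  have hshift : ∀ (p : ℝ) (t : Fin T),
      ∑ x ∈ Sf, c x * (x t : ℝ) * p ^ (n x - 1)
        = lam * r t * ∑ y ∈ Sf.filter (fun y => Function.update y t (y t + 1) ∈ Sf),
            c y * p ^ n y := by
    intro p t
    rw [Finset.mul_sum]
    rw [← Finset.sum_filter_of_ne
      (p := fun x => x t ≠ 0) (f := fun x => c x * (x t : ℝ) * p ^ (n x - 1)) ?hne]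
    case hne =>
      intro x _ hfx
      intro h0
      apply hfx
      simp [h0]
    refine Finset.sum_nbij' (fun x => Function.update x t (x t - 1))
      (fun y => Function.update y t (y t + 1)) ?_ ?_ ?_ ?_ ?_
    · -- maps into target
      intro x hx
      rw [Finset.mem_filter] at hx ⊢
      obtain ⟨hxS, hxt⟩ := hx
      have hle : ∀ s, Function.update x t (x t - 1) s ≤ x s := by
        intro s
        rcases eq_or_ne s t with rfl | hst
        · rw [Function.update_self]; omega
        · rw [Function.update_of_ne hst]
      refine ⟨hdown x _ hle hxS, ?_⟩
      have hxx : Function.update (Function.update x t (x t - 1)) t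
          (Function.update x t (x t - 1) t + 1) = x := by
        rw [Function.update_self, Function.update_idem]
        have : x t - 1 + 1 = x t := by omega
        rw [this, Function.update_eq_self]
      rw [hxx]
      exact hxS
    · -- reverse map into source
      intro y hy
      rw [Finset.mem_filter] at hy ⊢
      refine ⟨hy.2, ?_⟩
      beta_reduce
      rw [Function.update_self]
      omega
    · -- left inverse
      intro x hx
      rw [Finset.mem_filter] at hx
      beta_reduce
      rw [Function.update_self, Function.update_idem]
      have : x t - 1 + 1 = x t := by omega
      rw [this, Function.update_eq_self]
    · -- right inverse
      intro y _
      beta_reduce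
      rw [Function.update_self, Function.update_idem]
      have : y t + 1 - 1 = y t := by omega
      rw [this, Function.update_eq_self]
    · -- values agree
      intro x hx
      rw [Finset.mem_filter] at hx
      obtain ⟨hxS, hxt⟩ := hx
      set y := Function.update x t (x t - 1) with hy
      have hyx : Function.update y t (y t + 1) = x := by
        rw [hy, Function.update_self, Function.update_idem]
        have : x t - 1 + 1 = x t := by omega
        rw [this, Function.update_eq_self]
      have h1 : c x * ((y t : ℝ) + 1) = lam * r t * c y := by
        have := hcup y t
        rw [hyx] at this
        exact this
      have h2 : (x t : ℝ) = (y t : ℝ) + 1 := by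
        rw [hy, Function.update_self]
        have : x t = (x t - 1) + 1 := by omega
        rw [this]
        push_cast
        ring
      have h3 : n x - 1 = n y := by
        have := hnupd y t
        rw [hyx] at this
        omega
      rw [h2, h3]
      calc c x * ((y t : ℝ) + 1) * p ^ n y = lam * r t * c y * p ^ n y := by rw [h1]
        _ = lam * r t * (c y * p ^ n y) := by ring
  -- key derivative inequality
  have hkey : ∀ p : ℝ, 0 < p →
      ∑ x ∈ Sf, c x * ((n x : ℝ) * p ^ (n x - 1)) < lam * F p := by
    intro p hp
    have hsplit : ∑ x ∈ Sf, c x * ((n x : ℝ) * p ^ (n x - 1))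
        = ∑ t, ∑ x ∈ Sf, c x * (x t : ℝ) * p ^ (n x - 1) := by
      rw [Finset.sum_comm]
      refine Finset.sum_congr rfl fun x _ => ?_
      have : ((n x : ℝ)) = ∑ t, (x t : ℝ) := by
        rw [hn]; push_cast; rfl
      rw [this, Finset.sum_mul, Finset.mul_sum]
      refine Finset.sum_congr rfl fun t _ => ?_
      ring
    rw [hsplit]
    have hbound : ∀ t : Fin T,
        ∑ x ∈ Sf, c x * (x t : ℝ) * p ^ (n x - 1) ≤ lam * r t * F p := by
      intro t
      rw [hshift p t, hFc p]
      have hsub : ∑ y ∈ Sf.filter (fun y => Function.update y t (y t + 1) ∈ Sf),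
          c y * p ^ n y ≤ ∑ y ∈ Sf, c y * p ^ n y := by
        apply Finset.sum_le_sum_of_subset_of_nonneg (Finset.filter_subset _ _)
        intro y _ _
        have := hcpos y
        positivity
      have hlr : 0 < lam * r t := mul_pos hlam (hr t)
      exact mul_le_mul_of_nonneg_left hsub hlr.le
    have hstrict : ∑ x ∈ Sf, c x * (x t0 : ℝ) * p ^ (n x - 1) < lam * r t0 * F p := by
      rw [hshift p t0, hFc p]
      have hsub : ∑ y ∈ Sf.filter (fun y => Function.update y t0 (y t0 + 1) ∈ Sf),
          c y * p ^ n y < ∑ y ∈ Sf, c y * p ^ n y := by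
        apply Finset.sum_lt_sum_of_subset (Finset.filter_subset _ _) hy0S
        · rw [Finset.mem_filter]
          push_neg
          intro _
          exact hy0not
        · have := hcpos y0
          positivity
        · intro y _ _
          have := hcpos y
          positivity
      have hlr : 0 < lam * r t0 := mul_pos hlam (hr t0)
      exact (mul_lt_mul_iff_right₀ hlr).mpr hsub
    calc ∑ t, ∑ x ∈ Sf, c x * (x t : ℝ) * p ^ (n x - 1)
        < ∑ t, lam * r t * F p := by
          apply Finset.sum_lt_sum (fun t _ => hbound t) ⟨t0, Finset.mem_univ t0, hstrict⟩
      _ = lam * F p := by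
          rw [← Finset.sum_mul, ← Finset.mul_sum, hrsum]
          ring
  -- the function H and its derivative
  set H : ℝ → ℝ := fun p => Real.exp (-(lam * p)) * F p with hH
  have hHder : ∀ p : ℝ, HasDerivAt H
      (Real.exp (-(lam * p)) * (-(lam * 1)) * F p
        + Real.exp (-(lam * p)) * ∑ x ∈ Sf, c x * ((n x : ℝ) * p ^ (n x - 1))) p := by
    intro p
    have hFd : HasDerivAt F (∑ x ∈ Sf, c x * ((n x : ℝ) * p ^ (n x - 1))) p := by
      have h1 : HasDerivAt (fun q : ℝ => ∑ x ∈ Sf, c x * q ^ n x)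
          (∑ x ∈ Sf, c x * ((n x : ℝ) * p ^ (n x - 1))) p :=
        HasDerivAt.fun_sum fun x _ => (hasDerivAt_pow (n x) p).const_mul (c x)
      have hfun : F = fun q : ℝ => ∑ x ∈ Sf, c x * q ^ n x := funext hFc
      rw [hfun]
      exact h1
    have hEd : HasDerivAt (fun q : ℝ => Real.exp (-(lam * q)))
        (Real.exp (-(lam * p)) * (-(lam * 1))) p :=
      (((hasDerivAt_id p).const_mul lam).neg).exp
    exact hEd.mul hFd
  have hanti : StrictAntiOn H (Set.Icc (0:ℝ) 1) := by
    apply strictAntiOn_of_deriv_neg (convex_Icc 0 1)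
    · exact fun x _ => (hHder x).continuousAt.continuousWithinAt
    · intro x hx
      rw [interior_Icc] at hx
      rw [(hHder x).deriv]
      have h1 := hkey x hx.1
      have h2 := Real.exp_pos (-(lam * x))
      nlinarith
  have hHstar : H pstar = 1 - C / K := by
    have h0 : H pstar = Real.exp (-(lam * pstar)) * F pstar := rfl
    rw [h0, hpeq, hG, Real.exp_neg]
    field_simp
  clear hmem hdown h0S hy0S hy0max hy0not hwsum hnupd hcup hshift hkey hcpos hFc hF
  clear hHder hcond hSdef hpeq hG hc hn hSfdef ht0
  clear c n t0 y0 Sf hSfin S hτ τ hr hrsum r hT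
  -- main argument
  intro q hq hne ε hε
  obtain ⟨hq0, hq1⟩ := hq
  obtain ⟨hε0, hε1⟩ := hε
  obtain ⟨hps0, hps1⟩ := hpstar
  set p : ℝ := ε * q + (1 - ε) * pstar with hp
  have hpIcc : p ∈ Set.Icc (0:ℝ) 1 := by
    constructor
    · nlinarith
    · nlinarith
  have hpsIcc : pstar ∈ Set.Icc (0:ℝ) 1 := ⟨hps0.le, hps1.le⟩
  rw [hU, hU, hUOFF]
  have hHp : Real.exp (-(lam * p)) * F p = H p := rfl
  rw [hHp]
  rcases lt_or_gt_of_ne hne with hlt | hgt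
  · -- q < pstar, so p < pstar, H p > H pstar
    have hplt : p < pstar := by nlinarith [mul_pos hε0 (sub_pos.mpr hlt)]
    have h1 : H pstar < H p := hanti hpIcc hpsIcc hplt
    rw [hHstar] at h1
    have hKC : K * (C / K) = C := by field_simp
    have h2 : K * (1 - H p) < C := by nlinarith
    nlinarith [mul_pos (sub_pos.mpr hlt) (sub_pos.mpr h2)]
  · -- pstar < q, so pstar < p
    have hplt : pstar < p := by nlinarith [mul_pos hε0 (sub_pos.mpr hgt)]
    have h1 : H p < H pstar := hanti hpsIcc hpIcc hplt
    rw [hHstar] at h1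
    have hKC : K * (C / K) = C := by field_simp
    have h2 : C < K * (1 - H p) := by nlinarith
    nlinarith [mul_pos (sub_pos.mpr hgt) (sub_pos.mpr h2)]
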